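/- Let d ≥ 3, Ω = {1,…,d}, and let T be a legally colored d-regular tree. For every geodesic ray γ in T there exists an automorphism g of T with σ(g,v) = id for every vertex v (i.e., g ∈ U({id}), a color-preserving automorphism) such that the vertex sets γ(ℕ) and g·γ(ℕ) have finite intersection. (Equivalently, the group U({id}) fixes no end of T.) -/

import Mathlib

/-- The automorphism group of a simple graph, as a subgroup of the permutation
group of its vertex set. -/
def SimpleGraph.autSubgroup {V : Type*} (T : SimpleGraph V) : Subgroup (Equiv.Perm V) where
  carrier := {e | ∀ u v : V, T.Adj (e u) (e v) ↔ T.Adj u v}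
  one_mem' := fun _ _ => Iff.rfl
  mul_mem' := by
    intro a b ha hb u v
    simp only [Equiv.Perm.mul_apply]
    rw [ha, hb]
  inv_mem' := by
    intro a ha u v
    simpa using (ha (a⁻¹ u) (a⁻¹ v)).symm

/-- A legal coloring of a `d`-regular tree: every vertex's edges are colored
bijectively with the colors `Fin d`. The color of the edge `{u, v}` is `color u v`. -/
structure LegalColoring {V : Type*} (T : SimpleGraph V) (d : ℕ) where
  color : V → V → Fin d
  symm : ∀ ⦃u v : V⦄, T.Adj u v → color u v = color v u
  bij : ∀ (v : V) (i : Fin d), ∃! w : V, T.Adj v w ∧ color v w = i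

/-- The local permutation `σ(g, v)` of an automorphism `g` at a vertex `v`
belongs to the permutation group `F`. -/
def LocalIn {V : Type*} {d : ℕ} (T : SimpleGraph V) (C : LegalColoring T d)
    (F : Subgroup (Equiv.Perm (Fin d))) (g : Equiv.Perm V) (v : V) : Prop :=
  ∃ π ∈ F, ∀ ⦃w : V⦄, T.Adj v w → C.color (g v) (g w) = π (C.color v w)

/-- The universal Burger–Mozes group `U(F)` (as a set of permutations of the vertices):
automorphisms whose local permutation lies in `F` at every vertex. -/
def USet {V : Type*} {d : ℕ} (T : SimpleGraph V) (C : LegalColoring T d)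
    (F : Subgroup (Equiv.Perm (Fin d))) : Set (Equiv.Perm V) :=
  {g | g ∈ T.autSubgroup ∧ ∀ v : V, LocalIn T C F g v}

/-- The group `G(F)`: automorphisms whose local permutation lies in `F` at all but
finitely many vertices. -/
def GSet {V : Type*} {d : ℕ} (T : SimpleGraph V) (C : LegalColoring T d)
    (F : Subgroup (Equiv.Perm (Fin d))) : Set (Equiv.Perm V) :=
  {g | g ∈ T.autSubgroup ∧ {v : V | ¬ LocalIn T C F g v}.Finite}

/-- Le Boudec's group `G(F, F')` with almost prescribed local action (as a set of
permutations of the vertices): `G(F) ∩ U(F')`. -/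
def GFFSet {V : Type*} {d : ℕ} (T : SimpleGraph V) (C : LegalColoring T d)
    (F F' : Subgroup (Equiv.Perm (Fin d))) : Set (Equiv.Perm V) :=
  GSet T C F ∩ USet T C F'

namespace BMAux
open SimpleGraph Walk

variable {V : Type*} {d : ℕ} {T : SimpleGraph V}

/-- The unique neighbor of `x` along color `c`. -/
noncomputable def step (C : LegalColoring T d) (x : V) (c : Fin d) : V :=
  (C.bij x c).exists.choose

lemma adj_step (C : LegalColoring T d) (x : V) (c : Fin d) : T.Adj x (step C x c) :=
  (C.bij x c).exists.choose_spec.1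

lemma color_step (C : LegalColoring T d) (x : V) (c : Fin d) :
    C.color x (step C x c) = c :=
  (C.bij x c).exists.choose_spec.2

lemma step_unique (C : LegalColoring T d) {x w : V} {c : Fin d}
    (h : T.Adj x w) (hc : C.color x w = c) : w = step C x c :=
  (C.bij x c).unique ⟨h, hc⟩ ⟨adj_step C x c, color_step C x c⟩

lemma step_step (C : LegalColoring T d) (x : V) (c : Fin d) :
    step C (step C x c) c = x := by
  refine (step_unique C (T.adj_symm (adj_step C x c)) ?_).symm
  rw [← C.symm (adj_step C x c)]
  exact color_step C x c

/-- Follow a list of colors starting at `x`. -/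
noncomputable def read (C : LegalColoring T d) : V → List (Fin d) → V
  | x, [] => x
  | x, c :: u => read C (step C x c) u

@[simp] lemma read_nil (C : LegalColoring T d) (x : V) : read C x [] = x := rfl

@[simp] lemma read_cons (C : LegalColoring T d) (x : V) (c : Fin d) (u : List (Fin d)) :
    read C x (c :: u) = read C (step C x c) u := rfl

lemma read_concat (C : LegalColoring T d) (x : V) (u : List (Fin d)) (c : Fin d) :
    read C x (u ++ [c]) = step C (read C x u) c := by
  induction u generalizing x with
  | nil => rfl
  | cons a u ih => simp [ih]

/-- The color word of a walk. -/
def wordOf (C : LegalColoring T d) {u v : V} (p : T.Walk u v) : List (Fin d) :=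
  p.darts.map (fun e => C.color e.toProd.1 e.toProd.2)

@[simp] lemma wordOf_nil (C : LegalColoring T d) {u : V} :
    wordOf C (Walk.nil : T.Walk u u) = [] := rfl

@[simp] lemma wordOf_cons (C : LegalColoring T d) {u v w : V} (h : T.Adj u v)
    (p : T.Walk v w) : wordOf C (Walk.cons h p) = C.color u v :: wordOf C p := rfl

@[simp] lemma wordOf_concat (C : LegalColoring T d) {u v w : V} (p : T.Walk u v)
    (h : T.Adj v w) : wordOf C (p.concat h) = wordOf C p ++ [C.color v w] := by
  simp [wordOf, Walk.darts_concat, List.concat_eq_append]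

lemma read_wordOf (C : LegalColoring T d) {u v : V} (p : T.Walk u v) :
    read C u (wordOf C p) = v := by
  induction p with
  | nil => rfl
  | cons h p ih =>
    rw [wordOf_cons, read_cons, ← step_unique C h rfl]
    exact ih

lemma wordOf_chain' (C : LegalColoring T d) {u v : V} (p : T.Walk u v)
    (hp : p.IsPath) : (wordOf C p).Chain' (· ≠ ·) := by
  induction p with
  | nil => exact List.isChain_nil
  | @cons a b w h p ih =>
    rw [wordOf_cons, List.Chain', List.isChain_cons]
    refine ⟨?_, ih hp.of_cons⟩
    intro y hy
    cases p with
    | nil => simp at hy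
    | @cons _ b2 _ h2 q =>
      simp only [wordOf_cons, List.head?_cons, Option.mem_def, Option.some.injEq] at hy
      subst hy
      intro heq
      have hab2 : a = b2 :=
        (C.bij b (C.color b a)).unique ⟨h.symm, rfl⟩ ⟨h2, by rw [← heq]; exact C.symm h⟩
      subst hab2
      have hsup := hp.2
      simp [Walk.support_cons, List.nodup_cons] at hsup

section Tree

variable (hT : T.IsTree)

/-- The unique path from `v₀` to `w` in a tree. -/
noncomputable def pathTo (v₀ w : V) : T.Walk v₀ w :=
  (hT.existsUnique_path v₀ w).exists.choose

lemma pathTo_isPath (v₀ w : V) : (pathTo hT v₀ w).IsPath :=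
  (hT.existsUnique_path v₀ w).exists.choose_spec

lemma pathTo_unique {v₀ w : V} {p : T.Walk v₀ w} (hp : p.IsPath) :
    pathTo hT v₀ w = p :=
  (hT.existsUnique_path v₀ w).unique (pathTo_isPath hT v₀ w) hp

lemma pathTo_self (v₀ : V) : pathTo hT v₀ v₀ = Walk.nil :=
  pathTo_unique hT Walk.IsPath.nil

variable (C : LegalColoring T d)

/-- The color word from `v₀` to `w`. -/
noncomputable def word (v₀ w : V) : List (Fin d) :=
  wordOf C (pathTo hT v₀ w)

lemma read_word (v₀ w : V) : read C v₀ (word hT C v₀ w) = w :=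
  read_wordOf C _

lemma word_self (v₀ : V) : word hT C v₀ v₀ = [] := by
  rw [word, pathTo_self]
  rfl

lemma word_chain' (v₀ w : V) : (word hT C v₀ w).Chain' (· ≠ ·) :=
  wordOf_chain' C _ (pathTo_isPath hT v₀ w)

lemma eq_of_word_eq_nil {v₀ w : V} (h : word hT C v₀ w = []) : w = v₀ := by
  have h2 := read_word hT C v₀ w
  rw [h, read_nil] at h2
  exact h2.symm

/-- Dichotomy: stepping along color `c` either extends the path or retracts it. -/
lemma step_word (v₀ x : V) (c : Fin d) :
    word hT C v₀ (step C x c) = word hT C v₀ x ++ [c] ∨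
      word hT C v₀ x = word hT C v₀ (step C x c) ++ [c] := by
  classical
  set y := step C x c with hy
  have hadj : T.Adj x y := adj_step C x c
  set p := pathTo hT v₀ x with hp
  by_cases hmem : y ∈ p.support
  · right
    -- pathTo v₀ x = (pathTo v₀ y).concat hadj.symm
    have htake : pathTo hT v₀ y = p.takeUntil y hmem :=
      pathTo_unique hT ((pathTo_isPath hT v₀ x).takeUntil hmem)
    have hxnot : x ∉ (p.takeUntil y hmem).support := by
      intro hx
      have hspec := Walk.take_spec p hmem
      have hnodup : p.support.Nodup := (pathTo_isPath hT v₀ x).2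
      have hsupp : p.support =
          (p.takeUntil y hmem).support ++ (p.dropUntil y hmem).support.tail := by
        conv_lhs => rw [← hspec]
        exact Walk.support_append _ _
      rw [hsupp] at hnodup
      have hdisj := (List.nodup_append.mp hnodup).2.2
      have hxtail : x ∈ (p.dropUntil y hmem).support.tail := by
        have hxmem : x ∈ (p.dropUntil y hmem).support := Walk.end_mem_support _
        have hcons := Walk.support_eq_cons (p.dropUntil y hmem)
        rw [hcons] at hxmem
        rcases List.mem_cons.mp hxmem with hxm | hxm
        · exact absurd hxm hadj.ne
        · exact hxm
      exact hdisj x hx x hxtail rfl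
    have hr : ((p.takeUntil y hmem).concat hadj.symm).IsPath := by
      have htp : (p.takeUntil y hmem).IsPath := (pathTo_isPath hT v₀ x).takeUntil hmem
      rw [Walk.isPath_def, Walk.support_concat,
        List.nodup_append]
      exact ⟨htp.2, List.nodup_singleton x, by
        intro a ha b hb hab
        simp only [List.mem_singleton] at hb
        rw [hab, hb] at ha
        exact hxnot ha⟩
    have := pathTo_unique hT hr
    rw [word, word, htake, this, wordOf_concat]
    congr 1
    rw [← C.symm hadj]
    simp [hy, color_step]
  · left
    have hr : (p.concat hadj).IsPath := by
      rw [Walk.isPath_def, Walk.support_concat,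
        List.nodup_append]
      exact ⟨(pathTo_isPath hT v₀ x).2, List.nodup_singleton y, by
        intro a ha b hb hab
        simp only [List.mem_singleton] at hb
        rw [hab, hb] at ha
        exact hmem ha⟩
    have := pathTo_unique hT hr
    rw [word, word, this, wordOf_concat]
    congr 1
    simp [hy, color_step]

lemma step_word_of_getLast (v₀ x : V) (c : Fin d)
    (hc : (word hT C v₀ x).getLast? ≠ some c) :
    word hT C v₀ (step C x c) = word hT C v₀ x ++ [c] := by
  rcases step_word hT C v₀ x c with h | h
  · exact h
  · exact absurd (by rw [h]; exact List.getLast?_concat) hc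

/-- Decompose the path to `w ≠ v₀` as path-to-penultimate plus an edge. -/
lemma exists_concat {v₀ w : V} (hw : w ≠ v₀) :
    ∃ (y : V) (h : T.Adj y w), pathTo hT v₀ w = (pathTo hT v₀ y).concat h := by
  obtain ⟨y, h, q, hq⟩ := Walk.exists_eq_cons_of_ne hw (pathTo hT v₀ w).reverse
  refine ⟨y, h.symm, ?_⟩
  have hqpath : q.reverse.IsPath := by
    have : (pathTo hT v₀ w).reverse.IsPath := (pathTo_isPath hT v₀ w).reverse
    rw [hq] at this
    exact this.of_cons.reverse
  have hy : pathTo hT v₀ y = q.reverse := pathTo_unique hT hqpath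
  rw [hy]
  have : pathTo hT v₀ w = (pathTo hT v₀ w).reverse.reverse := (Walk.reverse_reverse _).symm
  rw [this, hq, Walk.reverse_cons]
  rfl

end Tree

/-- Reduction of `i :: u`. -/
def red (i : Fin d) : List (Fin d) → List (Fin d)
  | [] => [i]
  | c :: u => if c = i then u else i :: c :: u

lemma red_append (i c' c : Fin d) (u : List (Fin d)) :
    red i ((c' :: u) ++ [c]) = red i (c' :: u) ++ [c] := by
  by_cases h : c' = i <;> simp [red, h]

lemma getLast?_ne_of_chain' {l : List (Fin d)} {c : Fin d}
    (h : (l ++ [c]).Chain' (· ≠ ·)) : l.getLast? ≠ some c := by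
  intro hl
  obtain ⟨-, -, h3⟩ := List.isChain_append.mp h
  exact h3 c hl c (by simp) rfl

section Tree2

variable (hT : T.IsTree) (C : LegalColoring T d)

/-- The color-preserving inversion of the edge at `v₀` with color `i`. -/
noncomputable def gfun (v₀ : V) (i : Fin d) (w : V) : V :=
  read C v₀ (i :: word hT C v₀ w)

lemma word_step_base (v₀ : V) (c : Fin d) :
    word hT C v₀ (step C v₀ c) = [c] := by
  have hadj := adj_step C v₀ c
  have hpath : (Walk.cons hadj Walk.nil).IsPath := by
    simp [Walk.isPath_def, hadj.ne]
  rw [word, pathTo_unique hT hpath, wordOf_cons, wordOf_nil, color_step]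

lemma gfun_self (v₀ : V) (i : Fin d) : gfun hT C v₀ i v₀ = step C v₀ i := by
  show read C v₀ (i :: word hT C v₀ v₀) = step C v₀ i
  rw [word_self]
  rfl

lemma word_gfun (v₀ : V) (i : Fin d) (w : V) :
    word hT C v₀ (gfun hT C v₀ i w) = red i (word hT C v₀ w) := by
  have key : ∀ (n : ℕ) (w : V), (word hT C v₀ w).length ≤ n →
      word hT C v₀ (gfun hT C v₀ i w) = red i (word hT C v₀ w) := by
    intro n
    induction n with
    | zero =>
      intro w hw
      have hnil : word hT C v₀ w = [] :=
        List.eq_nil_of_length_eq_zero (Nat.le_zero.mp hw)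
      have hwv : w = v₀ := eq_of_word_eq_nil hT C hnil
      subst hwv
      rw [gfun_self, word_step_base, hnil]
      rfl
    | succ n ih =>
      intro w hw
      by_cases hnil : word hT C v₀ w = []
      · have hwv : w = v₀ := eq_of_word_eq_nil hT C hnil
        subst hwv
        rw [gfun_self, word_step_base, hnil]
        rfl
      · have hwv : w ≠ v₀ := fun h => hnil (h ▸ word_self hT C v₀)
        obtain ⟨y, hyw, hconcat⟩ := exists_concat hT hwv
        have hword : word hT C v₀ w = word hT C v₀ y ++ [C.color y w] := by
          rw [word, hconcat, wordOf_concat]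
          rfl
        set c := C.color y w with hc
        have hwstep : w = step C y c := step_unique C hyw rfl
        have hlen : (word hT C v₀ y).length ≤ n := by
          have h2 := hw
          rw [hword] at h2
          simp only [List.length_append, List.length_singleton] at h2
          omega
        have ihy := ih y hlen
        have hgw : gfun hT C v₀ i w = step C (gfun hT C v₀ i y) c := by
          show read C v₀ (i :: word hT C v₀ w) = _
          rw [hword]
          show read C v₀ ((i :: word hT C v₀ y) ++ [c]) = _
          rw [read_concat]
          rfl
        cases hy : word hT C v₀ y with
        | nil =>
          have hyv : y = v₀ := eq_of_word_eq_nil hT C hy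
          rw [hyv] at hgw hword
          have hgy : gfun hT C v₀ i v₀ = step C v₀ i := gfun_self hT C v₀ i
          by_cases hci : c = i
          · rw [hci] at hgw hword
            rw [hgw, hgy, step_step, hword, word_self]
            simp [red]
          · rw [hgw, hgy, step_word_of_getLast hT C v₀ (step C v₀ i) c
              (by rw [word_step_base]; simp [Ne.symm hci]), word_step_base, hword, word_self]
            simp [red, hci]
        | cons c' u'' =>
          have hred : red i (word hT C v₀ w) = red i (word hT C v₀ y) ++ [c] := by
            rw [hword, hy, red_append, ← hy]
          rw [hgw, hred, ← ihy]
          apply step_word_of_getLast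
          have hch := word_chain' hT C v₀ w
          rw [hword, hy] at hch
          have hlast : (c' :: u'').getLast? ≠ some c := getLast?_ne_of_chain' hch
          rw [ihy, hy]
          by_cases hci' : c' = i
          · rw [show red i (c' :: u'') = u'' by rw [hci']; simp [red]]
            cases u'' with
            | nil => simp
            | cons a l =>
              rw [← List.getLast?_cons_cons (a := c')]
              exact hlast
          · rw [show red i (c' :: u'') = i :: c' :: u'' by simp [red, hci']]
            rw [List.getLast?_cons_cons]
            exact hlast
  exact key (word hT C v₀ w).length w le_rfl

lemma gfun_gfun (v₀ : V) (i : Fin d) (w : V) :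
    gfun hT C v₀ i (gfun hT C v₀ i w) = w := by
  have h1 := word_gfun hT C v₀ i w
  show read C v₀ (i :: word hT C v₀ (gfun hT C v₀ i w)) = w
  rw [h1]
  have h2 := read_word hT C v₀ w
  cases hu : word hT C v₀ w with
  | nil =>
    rw [hu, read_nil] at h2
    simp only [red, read_cons, read_nil, step_step]
    exact h2
  | cons c u =>
    rw [hu] at h2
    by_cases hci : c = i
    · subst hci
      simp only [red, if_pos rfl]
      exact h2
    · simp only [red, if_neg hci, read_cons, step_step]
      rw [read_cons] at h2
      exact h2

lemma gfun_adj_eq (v₀ : V) (i : Fin d) {x w : V} (h : T.Adj x w) :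
    gfun hT C v₀ i w = step C (gfun hT C v₀ i x) (C.color x w) := by
  have hw : w = step C x (C.color x w) := step_unique C h rfl
  rcases step_word hT C v₀ x (C.color x w) with hcase | hcase
  · rw [← hw] at hcase
    show read C v₀ (i :: word hT C v₀ w) = _
    rw [hcase]
    show read C v₀ ((i :: word hT C v₀ x) ++ [C.color x w]) = _
    rw [read_concat]
    rfl
  · rw [← hw] at hcase
    have hx : gfun hT C v₀ i x = step C (gfun hT C v₀ i w) (C.color x w) := by
      show read C v₀ (i :: word hT C v₀ x) = _
      rw [hcase]
      show read C v₀ ((i :: word hT C v₀ w) ++ [C.color x w]) = _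
      rw [read_concat]
      rfl
    rw [hx, step_step]

lemma gfun_adj (v₀ : V) (i : Fin d) {x w : V} (h : T.Adj x w) :
    T.Adj (gfun hT C v₀ i x) (gfun hT C v₀ i w) := by
  rw [gfun_adj_eq hT C v₀ i h]
  exact adj_step C _ _

lemma gfun_color (v₀ : V) (i : Fin d) {x w : V} (h : T.Adj x w) :
    C.color (gfun hT C v₀ i x) (gfun hT C v₀ i w) = C.color x w := by
  rw [gfun_adj_eq hT C v₀ i h]
  exact color_step C _ _

end Tree2

end BMAux

open BMAux

/-- For every geodesic ray `γ` in a legally colored `d`-regular tree (`d ≥ 3`) there is a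
color-preserving automorphism `g` (i.e. `σ(g, v) = id` for all `v`, so `g ∈ U({id})`)
such that `γ(ℕ)` and `g·γ(ℕ)` have finite intersection: `U({id})` fixes no end of `T`. -/
theorem Uid_fixes_no_end {V : Type*} (d : ℕ) (hd : 3 ≤ d)
    (T : SimpleGraph V) (hT : T.IsTree) (C : LegalColoring T d)
    (γ : ℕ → V) (hinj : Function.Injective γ)
    (hadj : ∀ n : ℕ, T.Adj (γ n) (γ (n + 1))) :
    ∃ g ∈ T.autSubgroup,
      (∀ v w : V, T.Adj v w → C.color (g v) (g w) = C.color v w) ∧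
      (Set.range γ ∩ Set.range fun n => g (γ n)).Finite := by
  classical
  set v₀ := γ 0 with hv0
  set i := C.color (γ 0) (γ 1) with hi
  set gf := gfun hT C v₀ i with hgf
  set f : ℕ → Fin d := fun k => C.color (γ k) (γ (k + 1)) with hf
  have hfne : ∀ k, f k ≠ f (k + 1) := by
    intro k heq
    have hsy : C.color (γ (k+1)) (γ k) = C.color (γ (k+1)) (γ (k+2)) := by
      rw [← C.symm (hadj k)]
      exact heq
    have : γ k = γ (k + 2) :=
      (C.bij (γ (k+1)) (C.color (γ (k+1)) (γ k))).unique
        ⟨(hadj k).symm, rfl⟩ ⟨hadj (k+1), hsy.symm⟩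
    have := hinj this
    omega
  have hwγ : ∀ n, word hT C v₀ (γ n) = (List.range n).map f := by
    intro n
    induction n with
    | zero => exact word_self hT C v₀
    | succ n ih =>
      have hstep : γ (n + 1) = step C (γ n) (f n) := step_unique C (hadj n) rfl
      have hlast : (word hT C v₀ (γ n)).getLast? ≠ some (f n) := by
        rw [ih]
        cases n with
        | zero => simp
        | succ m =>
          rw [List.range_succ, List.map_append]
          simp only [List.map_cons, List.map_nil]
          rw [List.getLast?_concat]
          simp only [Ne, Option.some.injEq]
          exact hfne m
      rw [hstep, step_word_of_getLast hT C v₀ (γ n) (f n) hlast, ih,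
        List.range_succ, List.map_append]
      simp
  have hγ1 : γ 1 = step C v₀ i := step_unique C (hadj 0) rfl
  have hgf0 : gf (γ 0) = γ 1 := by
    rw [hgf, gfun_self, hγ1]
  have hgf1 : gf (γ 1) = γ 0 := by
    rw [← hgf0, hgf, gfun_gfun]
  have hkey : ∀ m, 2 ≤ m → ∀ n, γ n ≠ gf (γ m) := by
    intro m hm n heq
    have h1 : word hT C v₀ (γ n) = word hT C v₀ (gf (γ m)) := by rw [heq]
    rw [hgf, word_gfun hT C v₀ i (γ m), hwγ m, hwγ n] at h1
    obtain ⟨k, rfl⟩ : ∃ k, m = k + 2 := ⟨m - 2, by omega⟩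
    have hm2 : (List.range (k + 2)).map f
        = f 0 :: f 1 :: ((List.range k).map fun j => f (j + 2)) := by
      rw [List.range_succ_eq_map, List.range_succ_eq_map]
      simp [List.map_map, Function.comp_def]
    have hf0 : f 0 = i := rfl
    rw [hm2, show red i (f 0 :: f 1 :: ((List.range k).map fun j => f (j + 2)))
        = f 1 :: ((List.range k).map fun j => f (j + 2)) by simp [red, hf0]] at h1
    cases n with
    | zero => simp at h1
    | succ n' =>
      rw [List.range_succ_eq_map, List.map_cons] at h1
      have : f 0 = f 1 := (List.cons_eq_cons.mp h1).1
      exact hfne 0 this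
  refine ⟨⟨gf, gf, fun w => gfun_gfun hT C v₀ i w, fun w => gfun_gfun hT C v₀ i w⟩,
    ?_, ?_, ?_⟩
  · intro u v
    simp only [SimpleGraph.autSubgroup, Equiv.coe_fn_mk]
    constructor
    · intro h
      rw [hgf] at h
      have h2 := gfun_adj hT C v₀ i h
      rwa [gfun_gfun, gfun_gfun] at h2
    · intro h
      rw [hgf]
      exact gfun_adj hT C v₀ i h
  · intro v w h
    simp only [Equiv.coe_fn_mk, hgf]
    exact gfun_color hT C v₀ i h
  · have hsub : (Set.range γ ∩ Set.range fun n =>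
        (⟨gf, gf, fun w => gfun_gfun hT C v₀ i w, fun w => gfun_gfun hT C v₀ i w⟩ :
          Equiv.Perm V) (γ n)) ⊆ {γ 0, γ 1} := by
      rintro x ⟨⟨n, rfl⟩, ⟨m, hm⟩⟩
      simp only [Equiv.coe_fn_mk] at hm
      match m, hm with
      | 0, hm => right; rw [← hm, hgf0]; rfl
      | 1, hm => left; rw [← hm, hgf1]
      | (m + 2), hm => exact absurd hm.symm (hkey (m + 2) (by omega) n)
    exact Set.Finite.subset ((Set.finite_singleton (γ 1)).insert (γ 0)) hsub
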